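/- Let α be a real algebraic number of degree d with Galois conjugates α = α₁, α₂, …, α_d, and suppose |α_k| = 1 for some k. Let λ₁, …, λ_d be the images of a nonzero algebraic integer λ ∈ ℚ(α) under the d embeddings, and suppose |α_j| > 1 exactly for j ≤ p. If lim_{n→∞} ‖∑_{j=1}^{p} λ_j α_j^n‖ = 0, then a contradiction arises; i.e., limsup_{n→∞} ‖∑_{j=1}^{p} λ_j α_j^n‖ > 0 whenever some conjugate α_k satisfies |α_k| = 1. -/

import Mathlib

open Polynomial Finset Filter

namespace Stmt13Aux

variable {R : Type*} [CommRing R]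

/-- The shift operator on sequences. -/
noncomputable def shift (R : Type*) [CommRing R] : Module.End R (ℕ → R) :=
{ toFun := fun w n => w (n+1)
  map_add' := fun _ _ => rfl
  map_smul' := fun _ _ => rfl }

lemma shift_apply (w : ℕ → R) (n : ℕ) : shift R w n = w (n+1) := rfl

lemma shift_pow_apply (i : ℕ) (w : ℕ → R) (n : ℕ) : ((shift R ^ i) w) n = w (n + i) := by
  induction i generalizing w with
  | zero => rfl
  | succ i ih =>
      rw [pow_succ, Module.End.mul_apply, ih]
      rfl

lemma apply_aeval' (g : R[X]) {D : ℕ} (hD : g.natDegree < D) (w : ℕ → R) (n : ℕ) :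
    ((aeval (shift R) g) w) n = ∑ i ∈ Finset.range D, g.coeff i * w (n + i) := by
  rw [Polynomial.aeval_eq_sum_range' hD]
  simp [LinearMap.sum_apply, Finset.sum_apply, shift_pow_apply]

lemma geom_eigen (a : R) {w : ℕ → R} (hw : ∀ n, w (n+1) = a * w n) (n i : ℕ) :
    w (n + i) = a ^ i * w n := by
  induction i with
  | zero => simp
  | succ i ih =>
      show w ((n + i) + 1) = a ^ (i+1) * w n
      rw [hw, ih, pow_succ]
      ring

lemma aeval_shift_eigen (g : R[X]) (a : R) {w : ℕ → R} (hw : ∀ n, w (n+1) = a * w n) :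
    (aeval (shift R) g) w = g.eval a • w := by
  induction g using Polynomial.induction_on' with
  | add p q hp hq => rw [map_add, LinearMap.add_apply, hp, hq, eval_add, add_smul]
  | monomial i c =>
      funext n
      rw [aeval_monomial, Module.End.mul_apply, Module.algebraMap_end_apply]
      simp only [Pi.smul_apply, smul_eq_mul, shift_pow_apply, eval_monomial,
        geom_eigen a hw]
      ring

end Stmt13Aux

/-- Distance from a real number to the nearest integer. -/
noncomputable def distNearestInt (x : ℝ) : ℝ := |x - (round x : ℤ)|

set_option maxHeartbeats 1600000 in
set_option synthInstance.maxHeartbeats 400000 in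
/-- let `α` be a real algebraic number of degree `d` with Galois
conjugates `conj 0, …, conj (d-1)` (the roots of its minimal polynomial over `ℚ`),
with `|conj j| > 1` exactly for `j < p` (`p ≥ 1`), and some conjugate of modulus
exactly `1`. Let `λ = Q(α)` be a nonzero algebraic integer in `ℚ(α)`, with
conjugate images `λ_j = Q(conj j)`. Then
`limsup_n ‖∑_{j<p} λ_j (conj j)^n‖ > 0`; i.e. `‖∑_{j<p} λ_j (conj j)^n‖` does
not tend to `0`. -/
theorem stmt13 (α : ℝ) (hα : IsAlgebraic ℚ α)
    (d : ℕ) (hd : d = (minpoly ℚ α).natDegree)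
    (conj : Fin d → ℂ) (hinj : Function.Injective conj)
    (hconj : ∀ i, Polynomial.aeval (conj i) (minpoly ℚ α) = 0)
    (p : ℕ) (hp : 1 ≤ p)
    (hsplit : ∀ j : Fin d, ((j : ℕ) < p ↔ 1 < ‖conj j‖))
    (hk : ∃ k : Fin d, ‖conj k‖ = 1)
    (Q : Polynomial ℚ)
    (hQint : IsIntegral ℤ (Polynomial.aeval α Q))
    (hQ0 : Polynomial.aeval α Q ≠ 0) :
    ¬ Tendsto
      (fun n : ℕ => distNearestInt
        (∑ j ∈ Finset.univ.filter (fun j : Fin d => (j : ℕ) < p),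
          Polynomial.aeval (conj j) Q * conj j ^ n).re)
      atTop (nhds 0) := by
  classical
  intro htend
  obtain ⟨k, hkabs⟩ := hk
  have hint : IsIntegral ℚ α := hα.isIntegral
  set μ : ℚ[X] := minpoly ℚ α with hμdef
  have hμ_monic : μ.Monic := minpoly.monic hint
  have hμ_irr : Irreducible μ := minpoly.irreducible hint
  have hμdeg : μ.natDegree = d := hd.symm
  have hd1 : 0 < d := by
    rw [hd, hμdef]
    exact minpoly.natDegree_pos hint
  have hkp : ¬ ((k:ℕ) < p) := by
    rw [hsplit k, hkabs]
    exact lt_irrefl 1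
  have hpd : p < d := lt_of_le_of_lt (not_lt.mp hkp) k.isLt
  set e : ℕ := d - 1 with he
  set P : Finset (Fin d) := Finset.univ.filter (fun j : Fin d => (j : ℕ) < p) with hP
  set Z : ℕ → ℂ := fun n => ∑ j ∈ P, Polynomial.aeval (conj j) Q * conj j ^ n with hZdef
  set f : ℕ → ℝ := fun n => (Z n).re with hfdef
  have htf : Tendsto (fun n => distNearestInt (f n)) atTop (nhds 0) := htend
  -- μ over ℂ
  set μc : ℂ[X] := μ.map (algebraMap ℚ ℂ) with hμcdef
  have hμc_monic : μc.Monic := hμ_monic.map _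
  have hμc_deg : μc.natDegree = d := by rw [hμcdef, hμ_monic.natDegree_map, hμdeg]
  have hμc_ne : μc ≠ 0 := hμc_monic.ne_zero
  have hroot : ∀ i, μc.eval (conj i) = 0 := by
    intro i
    rw [hμcdef, Polynomial.eval_map, ← Polynomial.aeval_def]
    exact hconj i
  have hsp : Splits μc :=
    IsAlgClosed.splits μc
  have hcardroots : Multiset.card μc.roots = d := by
    rw [splits_iff_card_roots.mp hsp, hμc_deg]
  have hrootseq : μc.roots = Multiset.map conj Finset.univ.val := by
    refine (Multiset.eq_of_le_of_card_le ?_ ?_).symm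
    · refine (Multiset.le_iff_subset (Multiset.Nodup.map hinj Finset.univ.nodup)).mpr ?_
      intro x hx
      obtain ⟨i, _, rfl⟩ := Multiset.mem_map.mp hx
      exact Polynomial.mem_roots'.mpr ⟨hμc_ne, hroot i⟩
    · rw [hcardroots, Multiset.card_map]
      rw [← Finset.card_def, Finset.card_univ, Fintype.card_fin]
  have hμc_prod : μc = ∏ j : Fin d, (X - C (conj j)) := by
    conv_lhs => rw [hsp.eq_prod_roots_of_monic hμc_monic]
    rw [hrootseq, Multiset.map_map]
    rfl
  set hpol : ℂ[X] := ∏ j ∈ Finset.univ.erase k, (X - C (conj j)) with hhdef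
  have hfac : μc = (X - C (conj k)) * hpol := by
    rw [hμc_prod, hhdef, ← Finset.mul_prod_erase _ _ (Finset.mem_univ k)]
  have hh_monic : hpol.Monic := monic_prod_of_monic _ _ (fun j _ => monic_X_sub_C _)
  have hh_deg : hpol.natDegree = e := by
    rw [hhdef, natDegree_prod _ _ (fun j _ => X_sub_C_ne_zero _)]
    simp only [natDegree_X_sub_C, Finset.sum_const, smul_eq_mul, mul_one,
      Finset.card_erase_of_mem (Finset.mem_univ k), Finset.card_univ, Fintype.card_fin]
    exact he.symm
  have hh_eval : ∀ j : Fin d, j ≠ k → hpol.eval (conj j) = 0 := by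
    intro j hj
    rw [hhdef, eval_prod]
    refine Finset.prod_eq_zero (Finset.mem_erase.mpr ⟨hj, Finset.mem_univ j⟩) ?_
    simp
  -- the conjugate images of λ are nonzero
  have hlam : ∀ j : Fin d, Polynomial.aeval (conj j) Q ≠ 0 := by
    have hndvd : ¬ μ ∣ Q := by
      intro hdvd
      obtain ⟨c, rfl⟩ := hdvd
      exact hQ0 (by rw [map_mul, minpoly.aeval, zero_mul])
    obtain ⟨a, b, hab⟩ := (hμ_irr.coprime_iff_not_dvd.mpr hndvd)
    intro j hj0
    have h1 := congrArg (Polynomial.aeval (conj j)) hab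
    rw [map_add, map_mul, map_mul, hconj j, mul_zero, hj0, mul_zero, add_zero, map_one] at h1
    exact zero_ne_one h1
  -- star / conjugation symmetry
  have hstar_aeval : ∀ (g : ℚ[X]) (z : ℂ),
      (starRingEnd ℂ) (Polynomial.aeval z g) = Polynomial.aeval ((starRingEnd ℂ) z) g := by
    intro g z
    rw [Polynomial.aeval_def, Polynomial.aeval_def, Polynomial.hom_eval₂]
    congr 1
    exact Subsingleton.elim _ _
  have hσex : ∀ i : Fin d, ∃ j : Fin d, conj j = (starRingEnd ℂ) (conj i) := by
    intro i
    have hmem : (starRingEnd ℂ) (conj i) ∈ μc.roots := by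
      refine Polynomial.mem_roots'.mpr ⟨hμc_ne, ?_⟩
      show μc.eval _ = 0
      rw [hμcdef, Polynomial.eval_map, ← Polynomial.aeval_def, ← hstar_aeval, hconj i, map_zero]
    rw [hrootseq] at hmem
    obtain ⟨j, _, hj⟩ := Multiset.mem_map.mp hmem
    exact ⟨j, hj⟩
  choose σ hσ using hσex
  have hσσ : ∀ i, σ (σ i) = i := by
    intro i
    apply hinj
    rw [hσ, hσ, Complex.conj_conj]
  have hσP : ∀ j, (j ∈ P ↔ σ j ∈ P) := by
    intro j
    simp only [hP, Finset.mem_filter, Finset.mem_univ, true_and]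
    rw [hsplit, hsplit, hσ, Complex.norm_conj]
  have hZreal : ∀ n, ((f n : ℝ) : ℂ) = Z n := by
    intro n
    have hstarZ : (starRingEnd ℂ) (Z n) = Z n := by
      show (starRingEnd ℂ) (∑ j ∈ P, Polynomial.aeval (conj j) Q * conj j ^ n)
          = ∑ j ∈ P, Polynomial.aeval (conj j) Q * conj j ^ n
      calc (starRingEnd ℂ) (∑ j ∈ P, Polynomial.aeval (conj j) Q * conj j ^ n)
          = ∑ j ∈ P, Polynomial.aeval (conj (σ j)) Q * conj (σ j) ^ n := by
            rw [map_sum]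
            refine Finset.sum_congr rfl fun j _ => ?_
            rw [map_mul, map_pow, hstar_aeval, hσ]
        _ = ∑ j ∈ P, Polynomial.aeval (conj j) Q * conj j ^ n :=
            Finset.sum_bijective σ (Function.Involutive.bijective hσσ)
              (fun i => hσP i) (fun i _ => rfl)
    exact Complex.conj_eq_iff_re.mp hstarZ
  -- recurrence machinery for Z
  have hZsum : Z = ∑ j ∈ P, (fun n => Polynomial.aeval (conj j) Q * conj j ^ n) := by
    funext n
    simp [hZdef, Finset.sum_apply]
  have hZrec : ∀ g : ℂ[X], (∀ j ∈ P, g.eval (conj j) = 0) →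
      (Polynomial.aeval (Stmt13Aux.shift ℂ) g) Z = 0 := by
    intro g hg
    rw [hZsum, map_sum]
    refine Finset.sum_eq_zero fun j hj => ?_
    rw [Stmt13Aux.aeval_shift_eigen g (conj j) (fun n => by ring), hg j hj, zero_smul]
  have hA : ∀ n, ∑ i ∈ Finset.range (d+1), μc.coeff i * Z (n+i) = 0 := by
    intro n
    have h0 := hZrec μc (fun j _ => hroot j)
    have h1 := Stmt13Aux.apply_aeval' (R := ℂ) μc (D := d+1) (by rw [hμc_deg]; omega) Z n
    rw [h0] at h1
    simpa using h1.symm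
  have hcoefμc : ∀ i, μc.coeff i = ((μ.coeff i : ℚ) : ℂ) := by
    intro i
    rw [hμcdef, Polynomial.coeff_map]
    exact eq_ratCast _ _
  have hC : ∀ n, ∑ i ∈ Finset.range (d+1), (μ.coeff i : ℝ) * f (n+i) = 0 := by
    intro n
    have h2 : ((∑ i ∈ Finset.range (d+1), (μ.coeff i : ℝ) * f (n+i) : ℝ) : ℂ) = 0 := by
      rw [← hA n]
      push_cast
      refine Finset.sum_congr rfl fun i _ => ?_
      rw [hcoefμc i, ← hZreal (n+i)]
      try push_cast
      try ring
    exact_mod_cast h2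
  -- rounding
  set m' : ℕ → ℤ := fun n => round (f n) with hm'def
  set δ : ℕ → ℝ := fun n => f n - (m' n : ℝ) with hδdef
  have hδ0 : Tendsto δ atTop (nhds 0) := by
    rw [tendsto_zero_iff_abs_tendsto_zero]
    exact htf.congr fun n => rfl
  -- common denominator
  set D : ℕ := ∏ i ∈ Finset.range (d+1), (μ.coeff i).den with hDdef
  have hD0 : (D:ℚ) ≠ 0 := by
    have : 0 < D := Finset.prod_pos fun i _ => (μ.coeff i).den_pos
    exact_mod_cast this.ne'
  have hwi : ∀ i ∈ Finset.range (d+1), ∃ z : ℤ, (z : ℚ) = μ.coeff i * (D:ℚ) := by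
    intro i hi
    obtain ⟨c, hc⟩ := Finset.dvd_prod_of_mem (fun j => (μ.coeff j).den) hi
    refine ⟨(μ.coeff i).num * (c:ℤ), ?_⟩
    have hcast : ((D:ℕ):ℚ) = ((μ.coeff i).den : ℚ) * (c:ℚ) := by
      exact_mod_cast congrArg (Nat.cast : ℕ → ℚ) hc
    rw [hcast, ← mul_assoc, Rat.mul_den_eq_num]
    push_cast
    ring
  set w : ℕ → ℤ := fun i => (μ.coeff i * (D:ℚ)).num with hwdef
  have hw : ∀ i ∈ Finset.range (d+1), (w i : ℚ) = μ.coeff i * (D:ℚ) := by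
    intro i hi
    obtain ⟨z, hz⟩ := hwi i hi
    show (((μ.coeff i * (D:ℚ)).num : ℤ) : ℚ) = μ.coeff i * (D:ℚ)
    rw [← hz, Rat.num_intCast]
  set zz : ℕ → ℤ := fun n => ∑ i ∈ Finset.range (d+1), w i * m' (n+i) with hzzdef
  have hzzR : ∀ n, ((zz n : ℤ) : ℝ)
      = -(D:ℝ) * ∑ i ∈ Finset.range (d+1), (μ.coeff i : ℝ) * δ (n+i) := by
    intro n
    have hwr : ∀ i ∈ Finset.range (d+1), ((w i : ℤ):ℝ) = (μ.coeff i : ℝ) * (D:ℝ) := by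
      intro i hi
      have h2 : ((w i : ℚ):ℝ) = ((μ.coeff i * (D:ℚ) : ℚ) : ℝ) := by
        exact_mod_cast congrArg (Rat.cast : ℚ → ℝ) (hw i hi)
      push_cast at h2
      exact_mod_cast h2
    calc ((zz n : ℤ):ℝ)
        = ∑ i ∈ Finset.range (d+1), (D:ℝ) * ((μ.coeff i : ℝ) * (m' (n+i) : ℝ)) := by
          rw [hzzdef]
          push_cast
          refine Finset.sum_congr rfl fun i hi => ?_
          rw [hwr i hi]
          ring
      _ = (D:ℝ) * ((∑ i ∈ Finset.range (d+1), (μ.coeff i:ℝ) * f (n+i))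
            - ∑ i ∈ Finset.range (d+1), (μ.coeff i:ℝ) * δ (n+i)) := by
          rw [← Finset.sum_sub_distrib, Finset.mul_sum]
          refine Finset.sum_congr rfl fun i hi => ?_
          have hmf : (m' (n+i) : ℝ) = f (n+i) - δ (n+i) := by
            rw [hδdef]
            ring
          rw [hmf]
          ring
      _ = -(D:ℝ) * ∑ i ∈ Finset.range (d+1), (μ.coeff i : ℝ) * δ (n+i) := by
          rw [hC n]
          ring
  have hzzT : Tendsto (fun n => ((zz n : ℤ):ℝ)) atTop (nhds 0) := by
    have hsum : Tendsto (fun n => ∑ i ∈ Finset.range (d+1), (μ.coeff i : ℝ) * δ (n+i))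
        atTop (nhds 0) := by
      have h1 := tendsto_finset_sum (Finset.range (d+1))
        (f := fun i n => (μ.coeff i:ℝ) * δ (n+i)) (a := fun _ => 0)
        (fun i _ => by
          simpa using ((hδ0.comp (Filter.tendsto_add_atTop_nat i)).const_mul ((μ.coeff i : ℝ))))
      simpa using h1
    have h2 := hsum.const_mul (-(D:ℝ))
    simp only [mul_zero] at h2
    exact Tendsto.congr (fun n => (hzzR n).symm) h2
  have hev : ∀ᶠ n in atTop, zz n = 0 := by
    have h1 : Tendsto (fun n => |((zz n : ℤ):ℝ)|) atTop (nhds 0) :=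
      (tendsto_zero_iff_abs_tendsto_zero _).mp hzzT
    filter_upwards [h1.eventually_lt_const one_pos] with n hn
    have h2 : |zz n| < 1 := by exact_mod_cast hn
    exact Int.abs_lt_one_iff.mp h2
  obtain ⟨N, hN⟩ := eventually_atTop.mp hev
  -- the integer sequence s
  set s : ℕ → ℚ := fun n => (m' (N + n) : ℚ) with hsdef
  have hsrec : ∀ n, ∑ i ∈ Finset.range (d+1), μ.coeff i * s (n+i) = 0 := by
    intro n
    have hz0 : zz (N + n) = 0 := hN (N+n) (Nat.le_add_right N n)
    have h1 : ∑ i ∈ Finset.range (d+1), (w i:ℚ) * (m' (N+n+i):ℚ) = 0 := by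
      have h2 := congrArg (fun z : ℤ => (z : ℚ)) hz0
      simp only [hzzdef, Int.cast_zero] at h2
      push_cast at h2
      exact h2
    have h3 : (D:ℚ) * ∑ i ∈ Finset.range (d+1), μ.coeff i * s (n+i) = 0 := by
      rw [Finset.mul_sum, ← h1]
      refine Finset.sum_congr rfl fun i hi => ?_
      rw [hw i hi]
      show (D:ℚ) * (μ.coeff i * (m' (N+(n+i)):ℚ)) = μ.coeff i * (D:ℚ) * (m' (N+n+i):ℚ)
      rw [← add_assoc]
      ring
    exact (mul_eq_zero.mp h3).resolve_left hD0
  have hμs : (Polynomial.aeval (Stmt13Aux.shift ℚ) μ) s = 0 := by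
    funext n
    rw [Stmt13Aux.apply_aeval' (R := ℚ) μ (D := d+1) (by rw [hμdeg]; omega) s n]
    simpa using hsrec n
  -- complex sequences
  set δC : ℕ → ℂ := fun n => ((δ (N + n) : ℝ) : ℂ) with hδCdef
  have hμδreal : ∀ n, ∑ i ∈ Finset.range (d+1), (μ.coeff i : ℝ) * δ (N+n+i) = 0 := by
    intro n
    have h1 : ∑ i ∈ Finset.range (d+1), (μ.coeff i : ℝ) * (m' (N+n+i) : ℝ) = 0 := by
      have h2 := congrArg (fun q : ℚ => (q:ℝ)) (hsrec n)
      simp only [hsdef, Rat.cast_zero] at h2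
      push_cast at h2
      simp only [← add_assoc] at h2
      exact h2
    have h3 := hC (N+n)
    have h4 : ∑ i ∈ Finset.range (d+1), (μ.coeff i:ℝ) * δ (N+n+i)
        = (∑ i ∈ Finset.range (d+1), (μ.coeff i:ℝ) * f (N+n+i))
          - ∑ i ∈ Finset.range (d+1), (μ.coeff i:ℝ) * (m' (N+n+i):ℝ) := by
      rw [← Finset.sum_sub_distrib]
      refine Finset.sum_congr rfl fun i _ => ?_
      rw [hδdef]
      ring
    rw [h4, h3, h1, sub_zero]
  have hμδC : (Polynomial.aeval (Stmt13Aux.shift ℂ) μc) δC = 0 := by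
    funext n
    rw [Stmt13Aux.apply_aeval' (R := ℂ) μc (D := d+1) (by rw [hμc_deg]; omega) δC n]
    have h2 : ((∑ i ∈ Finset.range (d+1), (μ.coeff i:ℝ) * δ (N+n+i) : ℝ) : ℂ) = 0 := by
      rw [hμδreal n, Complex.ofReal_zero]
    simp only [Pi.zero_apply]
    rw [← h2]
    push_cast
    refine Finset.sum_congr rfl fun i _ => ?_
    rw [hcoefμc i, hδCdef]
    show ((μ.coeff i : ℚ):ℂ) * ((δ (N+(n+i)) : ℝ):ℂ) = ((μ.coeff i:ℝ):ℂ) * ((δ (N+n+i):ℝ):ℂ)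
    rw [← add_assoc]
    norm_cast
  set t : ℕ → ℂ := (Polynomial.aeval (Stmt13Aux.shift ℂ) hpol) δC with htdef
  have htstep : ∀ n, t (n+1) = conj k * t n := by
    have h0 : (Polynomial.aeval (Stmt13Aux.shift ℂ) (X - C (conj k))) t = 0 := by
      rw [htdef, ← Module.End.mul_apply, ← map_mul, ← hfac, hμδC]
    intro n
    have h1 := congrFun h0 n
    simp only [map_sub, Polynomial.aeval_X, Polynomial.aeval_C, LinearMap.sub_apply,
      Pi.sub_apply, Pi.zero_apply, Module.algebraMap_end_apply, Pi.smul_apply,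
      smul_eq_mul, Stmt13Aux.shift_apply] at h1
    exact sub_eq_zero.mp h1
  have hpt : ∀ n, t n = ∑ i ∈ Finset.range d, hpol.coeff i * δC (n+i) := by
    intro n
    rw [htdef]
    exact Stmt13Aux.apply_aeval' hpol (by rw [hh_deg]; omega) δC n
  have hδCl : Tendsto δC atTop (nhds 0) := by
    have hsh : Tendsto (fun n : ℕ => N + n) atTop atTop :=
      tendsto_atTop_mono (fun n => Nat.le_add_left n N) tendsto_id
    have h1 : Tendsto (fun n => δ (N + n)) atTop (nhds 0) := hδ0.comp hsh
    have h2 := (Complex.continuous_ofReal.tendsto 0).comp h1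
    simpa [hδCdef, Function.comp_def] using h2
  have htlim : Tendsto t atTop (nhds 0) := by
    rw [show t = fun n => ∑ i ∈ Finset.range d, hpol.coeff i * δC (n+i) from funext hpt]
    have h1 := tendsto_finset_sum (Finset.range d)
      (f := fun i n => hpol.coeff i * δC (n+i)) (a := fun _ => 0)
      (fun i _ => by
        simpa using ((hδCl.comp (Filter.tendsto_add_atTop_nat i)).const_mul (hpol.coeff i)))
    simpa using h1
  have htabs : ∀ n, ‖t n‖ = ‖t 0‖ := by
    intro n
    induction n with
    | zero => rfl
    | succ n ih => rw [htstep n, norm_mul, hkabs, one_mul, ih]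
  have htall : ∀ n, t n = 0 := by
    have h1 : Tendsto (fun n => ‖t n‖) atTop (nhds 0) := by
      have := (continuous_norm.tendsto 0).comp htlim
      simpa [Function.comp_def] using this
    have h2 : Tendsto (fun _ : ℕ => ‖t 0‖) atTop (nhds 0) :=
      h1.congr fun n => htabs n
    have h3 : ‖t 0‖ = 0 := tendsto_nhds_unique tendsto_const_nhds h2
    intro n
    have h4 : ‖t n‖ = 0 := by rw [htabs n, h3]
    exact norm_eq_zero.mp h4
  -- the sequence s is annihilated by hpol over ℂ
  have hhZfun : (Polynomial.aeval (Stmt13Aux.shift ℂ) hpol) Z = 0 := by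
    refine hZrec hpol fun j hj => ?_
    refine hh_eval j fun hjk => ?_
    rw [hP, Finset.mem_filter] at hj
    exact hkp (hjk ▸ hj.2)
  have hBZ : ∀ nn, ∑ i ∈ Finset.range d, hpol.coeff i * Z (nn+i) = 0 := by
    intro nn
    have h1 := Stmt13Aux.apply_aeval' (R := ℂ) hpol (D := d) (by rw [hh_deg]; omega) Z nn
    rw [hhZfun] at h1
    simpa using h1.symm
  have hs_h : ∀ n, ∑ i ∈ Finset.range d, hpol.coeff i * (s (n+i) : ℂ) = 0 := by
    intro n
    have h1 : ∀ i, (s (n+i) : ℂ) = Z (N+n+i) - δC (n+i) := by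
      intro i
      rw [add_assoc]
      show ((s (n+i) : ℚ) : ℂ) = Z (N+(n+i)) - ((δ (N+(n+i)) : ℝ):ℂ)
      rw [← hZreal (N+(n+i))]
      simp only [hsdef, hδdef]
      push_cast
      ring
    calc ∑ i ∈ Finset.range d, hpol.coeff i * (s (n+i):ℂ)
        = (∑ i ∈ Finset.range d, hpol.coeff i * Z (N+n+i))
          - ∑ i ∈ Finset.range d, hpol.coeff i * δC (n+i) := by
          rw [← Finset.sum_sub_distrib]
          refine Finset.sum_congr rfl fun i _ => ?_
          rw [h1 i]
          ring
      _ = 0 - t n := by rw [hBZ (N+n), hpt n]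
      _ = 0 := by rw [htall n, sub_zero]
  -- matrix / descent to a rational annihilator
  set M : Matrix (Fin d) (Fin d) ℚ := fun n i => s ((n:ℕ) + (i:ℕ)) with hMdef
  have hdetC : (((algebraMap ℚ ℂ : ℚ →+* ℂ)).mapMatrix M).det = 0 := by
    rw [← Matrix.exists_mulVec_eq_zero_iff]
    refine ⟨fun i => hpol.coeff (i:ℕ), ?_, ?_⟩
    · intro h0
      have h1 := congrFun h0 ⟨e, by omega⟩
      have h2 : hpol.coeff e = 1 := by
        have h3 := hh_monic.coeff_natDegree
        rwa [hh_deg] at h3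
      simp only [Pi.zero_apply] at h1
      have h4 : hpol.coeff e = 0 := h1
      rw [h2] at h4
      exact one_ne_zero h4
    · funext n
      show ∑ i : Fin d, _ = _
      simp only [RingHom.mapMatrix_apply, Matrix.map_apply]
      simp only [RingHom.mapMatrix_apply, Matrix.map_apply, hMdef, Matrix.mulVec,
        dotProduct, Pi.zero_apply]
      have h1 : ∀ i : Fin d, (algebraMap ℚ ℂ) (s ((n:ℕ) + (i:ℕ))) * hpol.coeff (i:ℕ)
          = hpol.coeff (i:ℕ) * ((s ((n:ℕ) + (i:ℕ)) : ℚ) : ℂ) := by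
        intro i
        rw [eq_ratCast (algebraMap ℚ ℂ)]
        ring
      rw [Finset.sum_congr rfl fun i _ => h1 i,
        Fin.sum_univ_eq_sum_range (fun i => hpol.coeff i * ((s ((n:ℕ) + i) : ℚ):ℂ)) d]
      exact hs_h (n:ℕ)
  have hdetQ : M.det = 0 := by
    have h1 : (algebraMap ℚ ℂ) M.det = 0 := by rw [RingHom.map_det, hdetC]
    rw [eq_ratCast (algebraMap ℚ ℂ)] at h1
    exact_mod_cast h1
  obtain ⟨c, hc0, hcv⟩ := Matrix.exists_mulVec_eq_zero_iff.mpr hdetQ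
  set g : ℚ[X] := ∑ i : Fin d, Polynomial.monomial (i:ℕ) (c i) with hgdef
  have hgdeg : g.natDegree < d := by
    have h1 : g.natDegree ≤ e := natDegree_sum_le_of_forall_le _ _
      (fun i _ => le_trans (natDegree_monomial_le _) (by have := i.isLt; omega))
    omega
  have hgcoeff : ∀ i : Fin d, g.coeff (i:ℕ) = c i := by
    intro i
    rw [hgdef, Polynomial.finset_sum_coeff]
    rw [Finset.sum_eq_single_of_mem i (Finset.mem_univ i)]
    · simp [Polynomial.coeff_monomial]
    · intro b _ hbne
      rw [Polynomial.coeff_monomial, if_neg]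
      intro hbe
      exact hbne (Fin.ext hbe)
  have hg0 : g ≠ 0 := by
    intro h0
    apply hc0
    funext i
    have h1 := hgcoeff i
    rw [h0, Polynomial.coeff_zero] at h1
    exact h1.symm
  set r : ℕ → ℚ := (Polynomial.aeval (Stmt13Aux.shift ℚ) g) s with hrdef
  have hr_init : ∀ n, n < d → r n = 0 := by
    intro n hn
    rw [hrdef, Stmt13Aux.apply_aeval' (R := ℚ) g hgdeg s n]
    have h1 := congrFun hcv ⟨n, hn⟩
    simp only [Matrix.mulVec, dotProduct, hMdef, Pi.zero_apply] at h1
    rw [← Fin.sum_univ_eq_sum_range (fun i => g.coeff i * s (n+i)) d, ← h1]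
    refine Finset.sum_congr rfl fun i _ => ?_
    rw [hgcoeff i]
    ring
  have hμr : (Polynomial.aeval (Stmt13Aux.shift ℚ) μ) r = 0 := by
    rw [hrdef, ← Module.End.mul_apply, ← map_mul, mul_comm μ g, map_mul,
      Module.End.mul_apply, hμs, map_zero]
  have hr_rec : ∀ n, ∑ i ∈ Finset.range (d+1), μ.coeff i * r (n+i) = 0 := by
    intro n
    have h1 := congrFun hμr n
    rw [Stmt13Aux.apply_aeval' (R := ℚ) μ (D := d+1) (by rw [hμdeg]; omega) r n] at h1
    simpa using h1
  have hr0 : ∀ n, r n = 0 := by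
    intro n
    induction n using Nat.strong_induction_on with
    | _ n ih =>
      by_cases hn : n < d
      · exact hr_init n hn
      · push_neg at hn
        have h1 := hr_rec (n - d)
        rw [Finset.sum_range_succ] at h1
        have hlast : μ.coeff d = 1 := by
          have h2 := hμ_monic.coeff_natDegree
          rwa [hμdeg] at h2
        rw [hlast, one_mul] at h1
        have h2 : ∀ i ∈ Finset.range d, μ.coeff i * r ((n-d)+i) = 0 := by
          intro i hi
          have hi' := Finset.mem_range.mp hi
          rw [ih ((n-d)+i) (by omega), mul_zero]
        rw [Finset.sum_eq_zero h2, zero_add] at h1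
        rw [show n = (n-d) + d by omega]
        exact h1
  have hrfun : r = (0 : ℕ → ℚ) := funext hr0
  have hndvd2 : ¬ μ ∣ g := by
    intro hdvd
    have h1 := Polynomial.natDegree_le_of_dvd hdvd hg0
    rw [hμdeg] at h1
    omega
  obtain ⟨a2, b2, hab2⟩ := hμ_irr.coprime_iff_not_dvd.mpr hndvd2
  have hs0fun : s = (0 : ℕ → ℚ) := by
    calc s = (Polynomial.aeval (Stmt13Aux.shift ℚ) (a2*μ + b2*g)) s := by
          rw [hab2, map_one]
          rfl
      _ = (Polynomial.aeval (Stmt13Aux.shift ℚ) a2) ((Polynomial.aeval (Stmt13Aux.shift ℚ) μ) s)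
          + (Polynomial.aeval (Stmt13Aux.shift ℚ) b2) ((Polynomial.aeval (Stmt13Aux.shift ℚ) g) s) := by
          rw [map_add, map_mul, map_mul]
          rfl
      _ = 0 := by rw [hμs, ← hrdef, hrfun, map_zero, map_zero, add_zero]
  -- final contradiction
  have hm0 : ∀ n, (m' (N+n) : ℝ) = 0 := by
    intro n
    have h1 := congrFun hs0fun n
    simp only [hsdef, Pi.zero_apply] at h1
    exact_mod_cast h1
  have hZN : ∀ n, Z (N+n) = ((δ (N+n) : ℝ):ℂ) := by
    intro n
    rw [← hZreal (N+n)]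
    show ((f (N+n) : ℝ):ℂ) = ((δ (N+n) : ℝ):ℂ)
    rw [hδdef]
    show ((f (N+n) : ℝ):ℂ) = (((f (N+n) - (m' (N+n):ℝ)) : ℝ):ℂ)
    rw [hm0 n, sub_zero]
  have hZNlim : Tendsto (fun n => Z (N+n)) atTop (nhds 0) := by
    rw [show (fun n => Z (N+n)) = fun n => ((δ (N+n):ℝ):ℂ) from funext hZN]
    have hsh : Tendsto (fun n : ℕ => N + n) atTop atTop :=
      tendsto_atTop_mono (fun n => Nat.le_add_left n N) tendsto_id
    have h1 : Tendsto (fun n => δ (N + n)) atTop (nhds 0) := hδ0.comp hsh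
    have h2 := (Complex.continuous_ofReal.tendsto 0).comp h1
    simpa [Function.comp_def] using h2
  set j0 : Fin d := ⟨0, hd1⟩ with hj0def
  have hj0p : (j0 : ℕ) < p := by
    show 0 < p
    omega
  have hj0 : j0 ∈ P := by
    rw [hP, Finset.mem_filter]
    exact ⟨Finset.mem_univ _, hj0p⟩
  have hj0abs : 1 < ‖conj j0‖ := (hsplit j0).mp hj0p
  set h2p : ℂ[X] := ∏ j ∈ P.erase j0, (X - C (conj j)) with hh2def
  have hcollapse : (Polynomial.aeval (Stmt13Aux.shift ℂ) h2p) Z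
      = fun n => h2p.eval (conj j0) * (Polynomial.aeval (conj j0) Q * conj j0 ^ n) := by
    rw [hZsum, map_sum]
    rw [Finset.sum_eq_single_of_mem j0 hj0 ?_]
    · rw [Stmt13Aux.aeval_shift_eigen _ (conj j0) (fun n => by ring)]
      funext n
      simp [Pi.smul_apply, smul_eq_mul]
    · intro b hb hbne
      rw [Stmt13Aux.aeval_shift_eigen _ (conj b) (fun n => by ring)]
      have h1 : h2p.eval (conj b) = 0 := by
        rw [hh2def, eval_prod]
        exact Finset.prod_eq_zero (Finset.mem_erase.mpr ⟨hbne, hb⟩) (by simp)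
      rw [h1, zero_smul]
  have hLlim : Tendsto
      (fun n => h2p.eval (conj j0) * (Polynomial.aeval (conj j0) Q * conj j0 ^ (N+n)))
      atTop (nhds 0) := by
    have h1 : ∀ n, h2p.eval (conj j0) * (Polynomial.aeval (conj j0) Q * conj j0 ^ (N+n))
        = ∑ i ∈ Finset.range (h2p.natDegree + 1), h2p.coeff i * Z ((N+n)+i) := by
      intro n
      have h2 := Stmt13Aux.apply_aeval' (R := ℂ) h2p (D := h2p.natDegree + 1)
        (lt_add_one _) Z (N+n)
      rw [hcollapse] at h2
      exact h2
    refine Tendsto.congr (fun n => (h1 n).symm) ?_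
    have h3 := tendsto_finset_sum (Finset.range (h2p.natDegree+1))
      (f := fun i n => h2p.coeff i * Z ((N+n)+i)) (a := fun _ => 0)
      (fun i _ => by
        have h4 := (hZNlim.comp (Filter.tendsto_add_atTop_nat i)).const_mul (h2p.coeff i)
        simp only [mul_zero] at h4
        refine Tendsto.congr (fun n => ?_) h4
        show h2p.coeff i * Z (N+(n+i)) = h2p.coeff i * Z ((N+n)+i)
        rw [add_assoc])
    simpa using h3
  have hCpos : 0 < ‖h2p.eval (conj j0)‖ * ‖Polynomial.aeval (conj j0) Q‖ := by
    apply mul_pos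
    · apply norm_pos_iff.mpr
      rw [hh2def, eval_prod]
      refine Finset.prod_ne_zero_iff.mpr ?_
      intro j hj
      simp only [eval_sub, eval_X, eval_C]
      exact sub_ne_zero.mpr fun hEq => (Finset.mem_erase.mp hj).1 (hinj hEq).symm
    · exact norm_pos_iff.mpr (hlam j0)
  have habslim : Tendsto
      (fun n => ‖h2p.eval (conj j0) * (Polynomial.aeval (conj j0) Q * conj j0 ^ (N+n))‖)
      atTop (nhds 0) := by
    have h1 := (continuous_norm.tendsto 0).comp hLlim
    rw [norm_zero] at h1
    exact h1.congr fun n => rfl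
  have hlb : ∀ n, ‖h2p.eval (conj j0)‖ * ‖Polynomial.aeval (conj j0) Q‖
      ≤ ‖h2p.eval (conj j0) * (Polynomial.aeval (conj j0) Q * conj j0 ^ (N+n))‖ := by
    intro n
    rw [norm_mul, norm_mul, norm_pow]
    have h1 : (1:ℝ) ≤ ‖conj j0‖ ^ (N+n) := one_le_pow₀ (le_of_lt hj0abs)
    nlinarith [norm_nonneg (h2p.eval (conj j0)),
      norm_nonneg (Polynomial.aeval (conj j0) Q)]
  obtain ⟨n, hn⟩ := (habslim.eventually_lt_const hCpos).exists
  exact absurd (hlb n) (not_le.mpr hn)
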